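/- Pathwise recursion for infection times (agent subject to external infection): assume x⁰_i = 0 for all i ∈ V. Define the earliest possible external infection time τ^ext_i := 1 + inf{k ∈ ℕ | u_i(k) = 1} ∈ ℕ ∪ {∞}. Then for every agent i ∈ V, k_i = min( τ^ext_i , inf_{j ∈ N_i} inf{k ∈ ℕ | k ≥ 1, c_{ji}(k−1) = 1, and k_j ≤ k−1 ≤ k_j + R_j} ), where all infima are taken in ℕ ∪ {∞} (inf ∅ = ∞). -/

import Mathlib

open Finset

/-- The step function `ρ : ℤ → {0,1}`, `ρ(z) = 1` iff `z > 0`. -/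
def stepFn (z : ℤ) : ℕ := if 0 < z then 1 else 0

lemma stepFn_le_one (z : ℤ) : stepFn z ≤ 1 := by unfold stepFn; split <;> simp

lemma stepFn_of_pos {z : ℤ} (h : 0 < z) : stepFn z = 1 := if_pos h
lemma stepFn_of_nonpos {z : ℤ} (h : ¬ 0 < z) : stepFn z = 0 := if_neg h

lemma sInf_coe_eq (P : ℕ → Prop) [DecidablePred P] (h : ∃ k, P k) :
    sInf {n : ℕ∞ | ∃ k : ℕ, P k ∧ n = (k : ℕ∞)} = ((Nat.find h : ℕ) : ℕ∞) := by
  refine le_antisymm (sInf_le ⟨_, Nat.find_spec h, rfl⟩) (le_sInf ?_)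
  rintro n ⟨k, hk, rfl⟩
  exact_mod_cast Nat.find_min' h hk

lemma sInf_coe_top (P : ℕ → Prop) (h : ¬ ∃ k, P k) :
    sInf {n : ℕ∞ | ∃ k : ℕ, P k ∧ n = (k : ℕ∞)} = ⊤ := by
  rw [show {n : ℕ∞ | ∃ k : ℕ, P k ∧ n = (k : ℕ∞)} = ∅ from ?_, sInf_empty]
  ext n
  simp only [Set.mem_setOf_eq, Set.mem_empty_iff_false, iff_false]
  rintro ⟨k, hk, -⟩
  exact h ⟨k, hk⟩

/-- Pathwise recursion for infection times (agent subject to external infection): assuming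
`x⁰ ≡ 0`, with `τ^ext_i = 1 + inf{k | u_i(k) = 1}`, every agent `i` satisfies
`k_i = min(τ^ext_i, inf_{j ∈ N_i} inf{k ≥ 1 | c_{ji}(k−1) = 1 and k_j ≤ k−1 ≤ k_j + R_j})`,
infima taken in `ℕ ∪ {∞}`. -/
theorem stmt16 {V : Type*} [Fintype V] [DecidableEq V]
    (E : V → V → Prop) [DecidableRel E]
    (hEsymm : ∀ i j, E i j ↔ E j i) (hEirr : ∀ i, ¬ E i i)
    (R : V → ℕ) (hR : ∀ i, 1 ≤ R i)
    (c : ℕ → V → V → ℕ) (hc01 : ∀ k i j, c k i j ≤ 1)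
    (hcsymm : ∀ k i j, c k i j = c k j i)
    (u : ℕ → V → ℕ) (hu01 : ∀ k i, u k i ≤ 1)
    (x0 : V → ℕ) (hx0 : ∀ i, x0 i ≤ 1)
    (x s : ℕ → V → ℕ)
    (hx_init : ∀ i, x 0 i = x0 i)
    (hs_init : ∀ i, s 0 i = 0)
    (hx_rec : ∀ k i, x (k + 1) i =
      stepFn ((R i : ℤ) - (s k i : ℤ)) *
        stepFn ((x k i : ℤ) +
          (∑ j ∈ Finset.univ.filter (fun j => E j i), (c k i j : ℤ) * (x k j : ℤ)) +
          (u k i : ℤ)))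
    (hs_rec : ∀ k i, s (k + 1) i = s k i + x k i)
    (y : ℕ → V → ℕ)
    (hy : ∀ k i, y k i = 1 - stepFn ((R i : ℤ) - (s k i : ℤ)))
    (ki : V → ℕ∞)
    (hki : ∀ i, ki i = sInf {n : ℕ∞ | ∃ m : ℕ, x m i = 1 ∧ n = (m : ℕ∞)})
    (hx0zero : ∀ i, x0 i = 0)
    (text : V → ℕ∞)
    (htext : ∀ i, text i = 1 + sInf {n : ℕ∞ | ∃ k : ℕ, u k i = 1 ∧ n = (k : ℕ∞)}) :
    ∀ i : V,
      ki i = min (text i)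
        (⨅ j ∈ Finset.univ.filter (fun j => E j i),
        sInf {n : ℕ∞ | ∃ k : ℕ, 1 ≤ k ∧ c (k - 1) j i = 1 ∧
          ki j ≤ ((k - 1 : ℕ) : ℕ∞) ∧ ((k - 1 : ℕ) : ℕ∞) ≤ ki j + (R j : ℕ∞) ∧
          n = (k : ℕ∞)}) := by
  classical
  -- x is {0,1}-valued
  have hx1 : ∀ k i, x k i ≤ 1 := by
    intro k
    induction k with
    | zero => intro i; rw [hx_init]; exact hx0 i
    | succ k ih =>
      intro i
      rw [hx_rec]
      calc stepFn _ * stepFn _ ≤ 1 * 1 :=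
            Nat.mul_le_mul (stepFn_le_one _) (stepFn_le_one _)
        _ = 1 := by norm_num
  -- s counts past infections
  have hssum : ∀ k i, s k i = ∑ m ∈ Finset.range k, x m i := by
    intro k i
    induction k with
    | zero => simpa using hs_init i
    | succ k ih => rw [hs_rec, ih, Finset.sum_range_succ]
  have hsumnn : ∀ k i,
      0 ≤ ∑ j ∈ Finset.univ.filter (fun j => E j i), (c k i j : ℤ) * (x k j : ℤ) :=
    fun k i => Finset.sum_nonneg fun j _ =>
      mul_nonneg (Int.natCast_nonneg _) (Int.natCast_nonneg _)
  have ki_le : ∀ i (m : ℕ), x m i = 1 → ki i ≤ (m : ℕ∞) := by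
    intro i m hm; rw [hki]; exact sInf_le ⟨m, hm, rfl⟩
  -- if the contagion expression is positive at step k, agent i is infected by k+1
  have infect : ∀ k i,
      0 < ((x k i : ℤ) +
        (∑ j ∈ Finset.univ.filter (fun j => E j i), (c k i j : ℤ) * (x k j : ℤ)) +
        (u k i : ℤ)) → ki i ≤ ((k + 1 : ℕ) : ℕ∞) := by
    intro k i hpos
    by_cases hs : s k i = 0
    · apply ki_le
      rw [hx_rec, hs, stepFn_of_pos hpos, stepFn_of_pos
        (show (0:ℤ) < (R i : ℤ) - ((0:ℕ):ℤ) by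
          have := hR i; push_cast; omega)]
    · obtain ⟨m, hm, hne⟩ := Finset.exists_ne_zero_of_sum_ne_zero
        (show ∑ m ∈ Finset.range k, x m i ≠ 0 by rw [← hssum]; exact hs)
      have hx : x m i = 1 := le_antisymm (hx1 m i) (Nat.one_le_iff_ne_zero.2 hne)
      have hmk : m < k := Finset.mem_range.1 hm
      exact (ki_le i m hx).trans (by exact_mod_cast Nat.le_succ_of_le hmk.le)
  -- persistence: from first infection, x stays 1 for exactly R j + 1 steps then 0 forever
  have persist : ∀ (j : V) (mj : ℕ), x mj j = 1 → (∀ m' < mj, x m' j = 0) →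
      ∀ t : ℕ, x (mj + t) j = (if t ≤ R j then 1 else 0) ∧
        s (mj + t) j = min t (R j + 1) := by
    intro j mj hmj hmin t
    have hs0 : s mj j = 0 := by
      rw [hssum]
      exact Finset.sum_eq_zero fun m hm => hmin m (Finset.mem_range.1 hm)
    induction t with
    | zero =>
      constructor
      · simpa [Nat.zero_le] using hmj
      · simpa using hs0
    | succ t ih =>
      obtain ⟨ihx, ihs⟩ := ih
      have heq : mj + (t + 1) = (mj + t) + 1 := by ring
      have hsnew : s (mj + (t + 1)) j = min (t + 1) (R j + 1) := by
        rw [heq, hs_rec, ihs, ihx]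
        rcases le_or_gt t (R j) with h | h
        · rw [if_pos h]; omega
        · rw [if_neg (by omega)]; omega
      refine ⟨?_, hsnew⟩
      rw [heq, hx_rec, ihs]
      rcases lt_or_ge t (R j) with h | h
      · have hx' : x (mj + t) j = 1 := by rw [ihx, if_pos h.le]
        rw [hx', stepFn_of_pos (show (0:ℤ) < (R j : ℤ) - ((min t (R j + 1) : ℕ) : ℤ) by
            push_cast; omega),
          stepFn_of_pos (show (0:ℤ) < ((1:ℕ):ℤ) + _ + (u (mj + t) j : ℤ) from by
            have h1 := hsumnn (mj + t) j
            have h2 : (0:ℤ) ≤ (u (mj + t) j : ℤ) := Int.natCast_nonneg _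
            push_cast
            linarith), if_pos (by omega)]
      · rw [stepFn_of_nonpos (show ¬ (0:ℤ) < (R j : ℤ) - ((min t (R j + 1) : ℕ) : ℤ) by
            push_cast; omega), zero_mul, if_neg (by omega)]
  -- ki characterization
  have hkifind : ∀ i (h : ∃ m, x m i = 1), ki i = ((Nat.find h : ℕ) : ℕ∞) := by
    intro i h; rw [hki]; exact sInf_coe_eq _ h
  have hkitop : ∀ i, (¬ ∃ m, x m i = 1) → ki i = ⊤ := by
    intro i h; rw [hki]; exact sInf_coe_top _ h
  intro i
  apply le_antisymm
  · -- ki i ≤ min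
    refine le_min ?_ ?_
    · -- ki i ≤ text i
      rw [htext]
      by_cases h : ∃ k, u k i = 1
      · rw [sInf_coe_eq _ h]
        have hu : u (Nat.find h) i = 1 := Nat.find_spec h
        have hle : ki i ≤ ((Nat.find h + 1 : ℕ) : ℕ∞) := by
          apply infect
          have h1 := hsumnn (Nat.find h) i
          have h2 : (0:ℤ) ≤ (x (Nat.find h) i : ℤ) := Int.natCast_nonneg _
          have h3 : (u (Nat.find h) i : ℤ) = 1 := by exact_mod_cast hu
          linarith
        refine hle.trans_eq ?_
        push_cast
        ring
      · rw [sInf_coe_top _ h]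
        simp
    · -- ki i ≤ iInf over neighbors
      refine le_iInf fun j => le_iInf fun hj => le_sInf ?_
      rintro n ⟨k, hk1, hc, hkj1, hkj2, rfl⟩
      -- ki j is finite
      have hexj : ∃ m, x m j = 1 := by
        by_contra hcon
        rw [hkitop j hcon] at hkj1
        have := top_le_iff.1 hkj1
        exact absurd this (by simp)
      set mj := Nat.find hexj with hmjdef
      have hkij : ki j = (mj : ℕ∞) := hkifind j hexj
      rw [hkij] at hkj1 hkj2
      have hmjle : mj ≤ k - 1 := by exact_mod_cast hkj1
      have hub : k - 1 ≤ mj + R j := by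
        have : ((k - 1 : ℕ) : ℕ∞) ≤ ((mj + R j : ℕ) : ℕ∞) := by push_cast; exact hkj2
        exact_mod_cast this
      have hminj : ∀ m' < mj, x m' j = 0 := by
        intro m' hm'
        have h1 := hx1 m' j
        have h2 := Nat.find_min hexj hm'
        omega
      have hxkj : x (k - 1) j = 1 := by
        have hp := (persist j mj (Nat.find_spec hexj) hminj ((k - 1) - mj)).1
        rwa [show mj + ((k - 1) - mj) = k - 1 from by omega, if_pos (by omega)] at hp
      have hjmem : j ∈ Finset.univ.filter (fun j => E j i) := hj
      have hterm : (1:ℤ) ≤ ∑ j' ∈ Finset.univ.filter (fun j => E j i),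
          (c (k - 1) i j' : ℤ) * (x (k - 1) j' : ℤ) := by
        have := Finset.single_le_sum
          (f := fun j' => (c (k - 1) i j' : ℤ) * (x (k - 1) j' : ℤ))
          (fun j' _ => mul_nonneg (Int.natCast_nonneg _) (Int.natCast_nonneg _)) hjmem
        have hval : (c (k - 1) i j : ℤ) * (x (k - 1) j : ℤ) = 1 := by
          rw [hcsymm, hxkj, hc]; norm_num
        rw [hval] at this
        exact this
      have hle := infect (k - 1) i (by
        have h2 : (0:ℤ) ≤ (x (k - 1) i : ℤ) := Int.natCast_nonneg _
        have h3 : (0:ℤ) ≤ (u (k - 1) i : ℤ) := Int.natCast_nonneg _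
        linarith)
      rwa [show k - 1 + 1 = k from by omega] at hle
  · -- min ≤ ki i
    by_cases h : ∃ m, x m i = 1
    · have hkie := hkifind i h
      set m := Nat.find h with hmdef
      have hxm : x m i = 1 := Nat.find_spec h
      have hmin : ∀ m' < m, x m' i = 0 := by
        intro m' hm'
        have h1 := hx1 m' i
        have h2 := Nat.find_min h hm'
        omega
      have hm1 : 1 ≤ m := by
        rcases Nat.eq_zero_or_pos m with h0 | h0
        · exfalso
          rw [h0] at hxm
          rw [hx_init, hx0zero] at hxm
          omega
        · exact h0
      have hs0 : s (m - 1) i = 0 := by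
        rw [hssum]
        exact Finset.sum_eq_zero fun m' hm' =>
          hmin m' (by have := Finset.mem_range.1 hm'; omega)
      have hxm1 : x (m - 1) i = 0 := hmin _ (by omega)
      have hrec := hx_rec (m - 1) i
      rw [show m - 1 + 1 = m from by omega, hxm, hs0, hxm1] at hrec
      have hpos : 0 < (∑ j ∈ Finset.univ.filter (fun j => E j i),
          (c (m - 1) i j : ℤ) * (x (m - 1) j : ℤ)) + (u (m - 1) i : ℤ) := by
        by_contra hnp
        rw [stepFn_of_nonpos (show ¬ (0:ℤ) < ((0:ℕ):ℤ) + _ + (u (m - 1) i : ℤ) from by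
          push_cast; push_cast at hnp; linarith), mul_zero] at hrec
        exact one_ne_zero hrec
      rw [hkie]
      by_cases hucase : u (m - 1) i = 1
      · -- external infection
        refine (min_le_left _ _).trans ?_
        rw [htext]
        have h1 : sInf {n : ℕ∞ | ∃ k : ℕ, u k i = 1 ∧ n = (k : ℕ∞)} ≤ ((m - 1 : ℕ) : ℕ∞) :=
          sInf_le ⟨m - 1, hucase, rfl⟩
        calc 1 + sInf {n : ℕ∞ | ∃ k : ℕ, u k i = 1 ∧ n = (k : ℕ∞)}
            ≤ 1 + ((m - 1 : ℕ) : ℕ∞) := add_le_add_right h1 1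
          _ = (m : ℕ∞) := by
              rw [show (1 : ℕ∞) = ((1:ℕ) : ℕ∞) from rfl, ← Nat.cast_add]
              congr 1
              omega
      · -- infection via a neighbor
        have hu0 : u (m - 1) i = 0 := by have := hu01 (m - 1) i; omega
        have hSig : 0 < ∑ j ∈ Finset.univ.filter (fun j => E j i),
            (c (m - 1) i j : ℤ) * (x (m - 1) j : ℤ) := by
          rw [hu0] at hpos
          simpa using hpos
        obtain ⟨j, hjmem, hjne⟩ := Finset.exists_ne_zero_of_sum_ne_zero hSig.ne'
        have hcne : c (m - 1) i j ≠ 0 ∧ x (m - 1) j ≠ 0 := by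
          rw [mul_ne_zero_iff] at hjne
          exact ⟨by exact_mod_cast hjne.1, by exact_mod_cast hjne.2⟩
        have hcj : c (m - 1) i j = 1 := by have := hc01 (m - 1) i j; omega
        have hxj : x (m - 1) j = 1 := by have := hx1 (m - 1) j; omega
        have hexj : ∃ m', x m' j = 1 := ⟨m - 1, hxj⟩
        set mj := Nat.find hexj with hmjdef
        have hkij : ki j = (mj : ℕ∞) := hkifind j hexj
        have hmjle : mj ≤ m - 1 := Nat.find_min' hexj hxj
        have hminj : ∀ m' < mj, x m' j = 0 := by
          intro m' hm'
          have h1 := hx1 m' j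
          have h2 := Nat.find_min hexj hm'
          omega
        have hub : m - 1 ≤ mj + R j := by
          by_contra hcon
          have hp := (persist j mj (Nat.find_spec hexj) hminj ((m - 1) - mj)).1
          rw [show mj + ((m - 1) - mj) = m - 1 from by omega, if_neg (by omega)] at hp
          omega
        have hmem : (m : ℕ∞) ∈ {n : ℕ∞ | ∃ k : ℕ, 1 ≤ k ∧ c (k - 1) j i = 1 ∧
            ki j ≤ ((k - 1 : ℕ) : ℕ∞) ∧ ((k - 1 : ℕ) : ℕ∞) ≤ ki j + (R j : ℕ∞) ∧
            n = (k : ℕ∞)} := by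
          refine ⟨m, hm1, by rw [← hcsymm]; exact hcj, ?_, ?_, rfl⟩
          · rw [hkij]; exact_mod_cast hmjle
          · rw [hkij]
            rw [show (mj : ℕ∞) + (R j : ℕ∞) = ((mj + R j : ℕ) : ℕ∞) from by push_cast; ring]
            exact_mod_cast hub
        exact le_trans (min_le_right _ _) (le_trans (iInf₂_le j hjmem) (sInf_le hmem))
    · rw [hkitop i h]
      exact le_top
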